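/- arXiv:1509.01747 — 7 statements merged into one kernel-verified Lean document; each statement's English description precedes it below -/
import Mathlib

section
/- Let G be a simple graph with a part assignment P, such that every vertex of G is incident with at most one cross edge. If p is a path in G from u to v whose part trace has length t with t ≥ 2 (in particular P(u) ≠ P(v)), then p has at least 2t−3 edges. (This is Lemma 1: a general route of order t between server-nodes lying in different top-level substructures of a completely connected recursively-defined network has hop-length at least 2t−3.) -/
open SimpleGraph List

private lemma gen_route_aux {V I : Type*} [DecidableEq I]
    (G : SimpleGraph V) (P : V → I)
    (hcross : ∀ v : V, {w : V | G.Adj v w ∧ P v ≠ P w}.Subsingleton) :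
    ∀ {u v : V} (p : G.Walk u v), p.IsPath →
      2 ≤ ((p.support.map P).destutter (· ≠ ·)).length →
      (2 * ((p.support.map P).destutter (· ≠ ·)).length - 3 ≤ p.length ∧
       (P u = P (p.getVert 1) →
        2 * ((p.support.map P).destutter (· ≠ ·)).length - 2 ≤ p.length)) := by
  intro u v p
  induction p with
  | nil => intro _ h2; simp at h2
  | @cons u w v h q ih =>
    intro hp h2
    have hq : q.IsPath := hp.of_cons
    have hus : u ∉ q.support := (Walk.cons_isPath_iff h q).mp hp |>.2
    have hsup : q.support = w :: q.support.tail := q.support_eq_cons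
    have hmap : ((Walk.cons h q).support).map P
        = P u :: P w :: (q.support.tail.map P) := by
      rw [Walk.support_cons, hsup]; simp only [List.map_cons, List.tail_cons]
    have hqmap : (q.support).map P = P w :: (q.support.tail.map P) := by
      rw [hsup]; simp only [List.map_cons, List.tail_cons]
    have hg1 : (Walk.cons h q).getVert 1 = q.getVert 0 := rfl
    by_cases hPuw : P u = P w
    · -- non-cross first edge
      have htr : (((Walk.cons h q).support).map P).destutter (· ≠ ·)
          = ((q.support).map P).destutter (· ≠ ·) := by
        rw [hmap, hqmap, hPuw, List.destutter_cons_cons, if_neg (by simp),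
          List.destutter_cons']
      rw [htr] at h2 ⊢
      obtain ⟨hA, _⟩ := ih hq h2
      rw [Walk.length_cons]
      exact ⟨by omega, fun _ => by omega⟩
    · -- cross first edge
      have htr : (((Walk.cons h q).support).map P).destutter (· ≠ ·)
          = P u :: ((q.support).map P).destutter (· ≠ ·) := by
        rw [hmap, hqmap, List.destutter_cons_cons, if_pos (by simpa using hPuw),
          List.destutter_cons']
      rw [htr]
      set tq := ((q.support).map P).destutter (· ≠ ·) |>.length with htq
      refine ⟨?_, fun hc => ?_⟩
      · rcases Nat.lt_or_ge tq 2 with hlt | hge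
        · rw [List.length_cons, Walk.length_cons]; omega
        · -- q starts non-cross
          have hlen : tq ≤ q.length + 1 := by
            calc tq ≤ ((q.support).map P).length :=
                  (List.destutter_sublist _ _).length_le
              _ = q.length + 1 := by simp
          have hql : 1 ≤ q.length := by omega
          have hwx : P w = P (q.getVert 1) := by
            by_contra hne
            have hadj : G.Adj w (q.getVert 1) := by
              have := q.adj_getVert_succ (i := 0) (by omega)
              simpa using this
            have hu : u ∈ {x : V | G.Adj w x ∧ P w ≠ P x} :=
              ⟨h.symm, fun he => hPuw he.symm⟩
            have hx : q.getVert 1 ∈ {x : V | G.Adj w x ∧ P w ≠ P x} :=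
              ⟨hadj, hne⟩
            have : u = q.getVert 1 := hcross w hu hx
            have : q.getVert 1 ∈ q.support :=
              Walk.mem_support_iff_exists_getVert.mpr ⟨1, rfl, hql⟩
            exact hus (by rwa [← ‹u = q.getVert 1›] at this)
          obtain ⟨_, hB⟩ := ih hq hge
          have := hB hwx
          rw [List.length_cons, Walk.length_cons]; omega
      · have : (Walk.cons h q).getVert 1 = w := q.getVert_zero
        rw [this] at hc
        exact absurd hc hPuw

/-- **Lemma 1.** In a simple graph `G` with a part assignment `P` such that every
vertex is incident with at most one cross edge (an edge whose endpoints lie in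
different parts), any path `p` from `u` to `v` whose part trace (the sequence of
parts of consecutive vertices with runs of equal entries collapsed) has length
`t ≥ 2` has at least `2 * t - 3` edges. -/
theorem general_route_order_t_length {V I : Type*} [DecidableEq I]
    (G : SimpleGraph V) (P : V → I)
    (hcross : ∀ v : V, {w : V | G.Adj v w ∧ P v ≠ P w}.Subsingleton)
    {u v : V} (p : G.Walk u v) (hp : p.IsPath) (t : ℕ) (ht : 2 ≤ t)
    (htrace : ((p.support.map P).destutter (· ≠ ·)).length = t) :
    2 * t - 3 ≤ p.length := by
  subst htrace
  exact (gen_route_aux G P hcross p hp ht).1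
end

section
/- Let (V, P, μ) be a cross matching in which every part has exactly N ≥ 1 elements, and let A and B be two distinct parts. Then the set of pairs (s, d) with P(s) = A, P(d) = B, and P(μ(s)) = P(μ(d)) ∉ {A, B} (i.e., s and d are matched into a common proxy part) has cardinality at most N. Consequently, since a 3-hop proxy route from s to d requires s and d to be matched into a common proxy part, for a pair (s,d) chosen uniformly at random from the N² pairs in A × B, the probability that there is a 3-hop proxy route from s to d is at most 1/N. (This is Lemma A.2: in a Generalized DCell(k,n), the probability that a random source–destination pair in distinct copies of DCell(k−1,n) admits a 3-hop proxy route is at most 1/t_{k−1}.) -/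
/-- **Lemma A.2.** Let `(V, P, μ)` be a cross matching in which every part has
exactly `N ≥ 1` elements, and let `A ≠ B` be parts.  The set of pairs `(s, d)`
with `P s = A`, `P d = B` and `s, d` matched into a common proxy part (one
distinct from `A` and `B`) has cardinality at most `N`; hence for a uniformly
random pair in `A × B` the probability of a 3-hop proxy route is at most `1/N`. -/
theorem cross_matching_proxy_pairs_le {V I : Type*} [Fintype V] [DecidableEq I]
    (P : V → I) (hsurj : Function.Surjective P) (N : ℕ) (hN : 1 ≤ N)
    (hfib : ∀ i : I, (Finset.univ.filter fun v => P v = i).card = N)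
    (μ : V → V) (hinv : Function.Involutive μ) (hfix : ∀ v, μ v ≠ v)
    (hcross : ∀ v, P (μ v) ≠ P v)
    (huniq : ∀ A B : I, A ≠ B → ∃! v : V, P v = A ∧ P (μ v) = B)
    (A B : I) (hAB : A ≠ B) :
    (Finset.univ.filter fun sd : V × V =>
        P sd.1 = A ∧ P sd.2 = B ∧ P (μ sd.1) = P (μ sd.2) ∧
        P (μ sd.1) ≠ A ∧ P (μ sd.1) ≠ B).card ≤ N ∧
    ((Finset.univ.filter fun sd : V × V =>
        P sd.1 = A ∧ P sd.2 = B ∧ P (μ sd.1) = P (μ sd.2) ∧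
        P (μ sd.1) ≠ A ∧ P (μ sd.1) ≠ B).card : ℚ) / (N ^ 2 : ℚ) ≤ 1 / (N : ℚ) := by
  have hcard : (Finset.univ.filter fun sd : V × V =>
        P sd.1 = A ∧ P sd.2 = B ∧ P (μ sd.1) = P (μ sd.2) ∧
        P (μ sd.1) ≠ A ∧ P (μ sd.1) ≠ B).card ≤ N := by
    rw [← hfib A]
    apply Finset.card_le_card_of_injOn Prod.fst
    · intro sd hsd
      exact Finset.mem_filter.mpr ⟨Finset.mem_univ _, (Finset.mem_filter.mp hsd).2.1⟩
    · intro sd1 h1 sd2 h2 hfst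
      simp only [Finset.coe_filter, Set.mem_setOf_eq, Finset.mem_coe,
        Finset.mem_filter, Finset.mem_univ, true_and] at h1 h2
      obtain ⟨hs1, hd1, hc1, _, hnB1⟩ := h1
      obtain ⟨hs2, hd2, hc2, _, hnB2⟩ := h2
      have hCB : P (μ sd1.1) ≠ B := hnB1
      obtain ⟨v, _, hvuniq⟩ := huniq B (P (μ sd1.1)) (fun h => hCB h.symm)
      have e1 : sd1.2 = v := hvuniq sd1.2 ⟨hd1, hc1.symm⟩
      have e2 : sd2.2 = v := by
        apply hvuniq sd2.2
        refine ⟨hd2, ?_⟩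
        rw [← hc2, hfst]
      exact Prod.ext hfst (e1.trans e2.symm)
  refine ⟨hcard, ?_⟩
  have hNpos : (0 : ℚ) < (N : ℚ) := by exact_mod_cast hN
  rw [div_le_div_iff₀ (by positivity) hNpos]
  have : ((Finset.univ.filter fun sd : V × V =>
        P sd.1 = A ∧ P sd.2 = B ∧ P (μ sd.1) = P (μ sd.2) ∧
        P (μ sd.1) ≠ A ∧ P (μ sd.1) ≠ B).card : ℚ) ≤ (N : ℚ) := by
    exact_mod_cast hcard
  nlinarith
end

section
/- Let (V, P, μ) be a cross matching in which every part has exactly N ≥ 1 elements, and let A and B be two distinct parts. Then for every s with P(s) = A, there is at most one d with P(d) = B such that P(μ(s)) = P(μ(d)) ∉ {A, B}, and there is exactly one such d if and only if P(μ(s)) ≠ B. Consequently the set of pairs (s, d) ∈ A × B with P(μ(s)) = P(μ(d)) ∉ {A, B} has cardinality exactly N − 1. -/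
/-- Let `(V, P, μ)` be a cross matching in which every part has exactly `N ≥ 1`
elements, and let `A ≠ B` be parts.  For every `s` with `P s = A` there is at
most one `d` with `P d = B` matched into the same proxy part (distinct from `A`
and `B`) as `s`, and exactly one such `d` exists iff `P (μ s) ≠ B`.  Hence the
set of such pairs `(s, d)` has cardinality exactly `N - 1`. -/
theorem cross_matching_proxy_pairs_count {V I : Type*} [Fintype V] [DecidableEq I]
    (P : V → I) (hsurj : Function.Surjective P) (N : ℕ) (hN : 1 ≤ N)
    (hfib : ∀ i : I, (Finset.univ.filter fun v => P v = i).card = N)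
    (μ : V → V) (hinv : Function.Involutive μ) (hfix : ∀ v, μ v ≠ v)
    (hcross : ∀ v, P (μ v) ≠ P v)
    (huniq : ∀ A B : I, A ≠ B → ∃! v : V, P v = A ∧ P (μ v) = B)
    (A B : I) (hAB : A ≠ B) :
    (∀ s : V, P s = A →
      ({d : V | P d = B ∧ P (μ s) = P (μ d) ∧ P (μ s) ≠ A ∧ P (μ s) ≠ B}).Subsingleton ∧
      ((∃! d : V, P d = B ∧ P (μ s) = P (μ d) ∧ P (μ s) ≠ A ∧ P (μ s) ≠ B) ↔
        P (μ s) ≠ B)) ∧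
    (Finset.univ.filter fun sd : V × V =>
        P sd.1 = A ∧ P sd.2 = B ∧ P (μ sd.1) = P (μ sd.2) ∧
        P (μ sd.1) ≠ A ∧ P (μ sd.1) ≠ B).card = N - 1 := by
  classical
  constructor
  · intro s hs
    constructor
    · intro d1 h1 d2 h2
      obtain ⟨hd1, he1, hA1, hB1⟩ := h1
      obtain ⟨hd2, he2, hA2, hB2⟩ := h2
      obtain ⟨v, hv, huv⟩ := huniq B (P (μ s)) (Ne.symm hB1)
      exact (huv d1 ⟨hd1, he1.symm⟩).trans (huv d2 ⟨hd2, he2.symm⟩).symm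
    · constructor
      · rintro ⟨d, ⟨_, _, _, hB⟩, _⟩
        exact hB
      · intro hB
        have hA : P (μ s) ≠ A := hs ▸ hcross s
        obtain ⟨v, ⟨hv1, hv2⟩, huv⟩ := huniq B (P (μ s)) (Ne.symm hB)
        refine ⟨v, ⟨hv1, hv2.symm, hA, hB⟩, ?_⟩
        rintro d ⟨hd1, hd2, _, _⟩
        exact huv d ⟨hd1, hd2.symm⟩
  · -- bijection with { s | P s = A ∧ P (μ s) ≠ B }
    have hcard : (Finset.univ.filter fun s : V => P s = A ∧ P (μ s) ≠ B).card = N - 1 := by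
      obtain ⟨w, ⟨hw1, hw2⟩, huw⟩ := huniq A B hAB
      have hsplit : (Finset.univ.filter fun v : V => P v = A) =
          insert w (Finset.univ.filter fun s : V => P s = A ∧ P (μ s) ≠ B) := by
        ext v
        simp only [Finset.mem_filter, Finset.mem_univ, true_and, Finset.mem_insert]
        constructor
        · intro hv
          by_cases h : P (μ v) = B
          · exact Or.inl (huw v ⟨hv, h⟩)
          · exact Or.inr ⟨hv, h⟩
        · rintro (rfl | ⟨h, _⟩)
          · exact hw1
          · exact h
      have hwnot : w ∉ (Finset.univ.filter fun s : V => P s = A ∧ P (μ s) ≠ B) := by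
        simp [hw2]
      have := hfib A
      rw [hsplit, Finset.card_insert_of_notMem hwnot] at this
      omega
    rw [← hcard]
    apply Finset.card_bij (fun sd _ => sd.1)
    · rintro ⟨s, d⟩ h
      simp only [Finset.mem_filter, Finset.mem_univ, true_and] at h ⊢
      exact ⟨h.1, h.2.2.2.2⟩
    · rintro ⟨s1, d1⟩ h1 ⟨s2, d2⟩ h2 heq
      simp only [Finset.mem_filter, Finset.mem_univ, true_and] at h1 h2
      simp only at heq
      subst heq
      obtain ⟨_, hd1, he1, _, hB1⟩ := h1
      obtain ⟨_, hd2, he2, _, hB2⟩ := h2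
      obtain ⟨v, hv, huv⟩ := huniq B (P (μ s1)) (Ne.symm hB1)
      have : d1 = d2 := (huv d1 ⟨hd1, he1.symm⟩).trans (huv d2 ⟨hd2, he2.symm⟩).symm
      rw [this]
    · intro s hsm
      simp only [Finset.mem_filter, Finset.mem_univ, true_and] at hsm
      obtain ⟨hs, hB⟩ := hsm
      have hA : P (μ s) ≠ A := hs ▸ hcross s
      obtain ⟨v, ⟨hv1, hv2⟩, _⟩ := huniq B (P (μ s)) (Ne.symm hB)
      refine ⟨(s, v), ?_, rfl⟩
      simp only [Finset.mem_filter, Finset.mem_univ, true_and]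
      exact ⟨hs, hv1, hv2.symm, hA, hB⟩
end

section
/- Let n ≥ 4 be an even integer and define the sequence of rationals t_0 = n and t_k = t_{k−1}·(t_{k−1}/2^k + 1) for k ≥ 1. Then for every k ≥ 0, t_k is a positive integer divisible by 2^{k+1}. In particular, for every k ≥ 1 the quantity g_k = t_{k−1}/2^k + 1 is a positive integer, so the FiConn construction, which builds FiConn(k,n) from g_k copies of FiConn(k−1,n), is well-defined at every level. -/
/-- Let `n ≥ 4` be even and define the rationals `t 0 = n`,
`t k = t (k-1) * (t (k-1) / 2^k + 1)` for `k ≥ 1`.  Then every `t k` is a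
positive integer divisible by `2^(k+1)`; in particular every
`g k = t (k-1) / 2^k + 1` (`k ≥ 1`) is a positive integer, so the FiConn
construction is well-defined at every level. -/
theorem ficonn_well_defined (n : ℕ) (hn : 4 ≤ n) (hev : Even n)
    (t : ℕ → ℚ) (h0 : t 0 = n)
    (hrec : ∀ k : ℕ, t (k + 1) = t k * (t k / 2 ^ (k + 1) + 1)) :
    (∀ k : ℕ, ∃ m : ℕ, 0 < m ∧ 2 ^ (k + 1) ∣ m ∧ t k = (m : ℚ)) ∧
    (∀ k : ℕ, ∃ g : ℕ, 0 < g ∧ t k / 2 ^ (k + 1) + 1 = (g : ℚ)) := by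
  have key : ∀ k : ℕ, ∃ c : ℕ, 0 < c ∧ t k = ((2 ^ (k + 1) * c : ℕ) : ℚ) := by
    intro k
    induction k with
    | zero =>
      obtain ⟨c, hc⟩ := hev
      refine ⟨c, by omega, ?_⟩
      rw [h0, hc]
      push_cast
      ring
    | succ k ih =>
      obtain ⟨c, hc, ht⟩ := ih
      have hdiv : t k / 2 ^ (k + 1) = (c : ℚ) := by
        rw [ht]
        push_cast
        field_simp
      have heven : Even (c * (c + 1)) := Nat.even_mul_succ_self c
      obtain ⟨d, hd⟩ := heven
      refine ⟨d, by nlinarith, ?_⟩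
      have : t (k + 1) = ((2 ^ (k + 1) * c : ℕ) : ℚ) * ((c : ℚ) + 1) := by
        rw [hrec k, hdiv, ht]
      rw [this]
      have : (2 ^ (k + 1) * c : ℕ) * (c + 1) = 2 ^ (k + 1 + 1) * d := by
        have : c * (c + 1) = 2 * d := by omega
        calc 2 ^ (k + 1) * c * (c + 1) = 2 ^ (k + 1) * (c * (c + 1)) := by ring
        _ = 2 ^ (k + 1) * (2 * d) := by rw [this]
        _ = 2 ^ (k + 1 + 1) * d := by ring
      rw [← this]
      push_cast
      ring
  constructor
  · intro k
    obtain ⟨c, hc, ht⟩ := key k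
    exact ⟨2 ^ (k + 1) * c, by positivity, Dvd.intro c rfl, ht⟩
  · intro k
    obtain ⟨c, hc, ht⟩ := key k
    refine ⟨c + 1, by omega, ?_⟩
    rw [ht]
    push_cast
    field_simp
end

section
/- Let n ≥ 4 be an even integer and define integer sequences by a_0 = t_0 = n and, for k ≥ 1, g_k = a_{k−1}/2 + 1, t_k = g_k·t_{k−1}, and a_k = g_k·a_{k−1} − g_k·(g_k − 1). Then these recurrences are well-defined over the integers (every a_k is a positive even integer) and a_k·2^k = t_k for every k ≥ 0; equivalently, g_k = t_{k−1}/2^k + 1 for every k ≥ 1. (This is the identity b/2 + 1 = t_{k−1}/2^k + 1 used in the definition of FiConn, where b = a_{k−1} is the number of available server-nodes of FiConn(k−1,n).) -/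
/-- Let `n ≥ 4` be even and define integer sequences `a 0 = t 0 = n` and, for
`k ≥ 1`, `g k = a (k-1) / 2 + 1`, `t k = g k * t (k-1)`, and
`a k = g k * a (k-1) - g k * (g k - 1)`.  Then every `a k` is a positive even
integer (so the recurrences are well-defined over the integers), and
`a k * 2^k = t k` for every `k`; equivalently `g k = t (k-1) / 2^k + 1` for
every `k ≥ 1`. -/
theorem ficonn_available_nodes (n : ℤ) (hn : 4 ≤ n) (hev : Even n)
    (a g t : ℕ → ℤ) (ha0 : a 0 = n) (ht0 : t 0 = n)
    (hg : ∀ k : ℕ, 1 ≤ k → g k = a (k - 1) / 2 + 1)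
    (ht : ∀ k : ℕ, 1 ≤ k → t k = g k * t (k - 1))
    (ha : ∀ k : ℕ, 1 ≤ k → a k = g k * a (k - 1) - g k * (g k - 1)) :
    (∀ k : ℕ, 0 < a k ∧ Even (a k)) ∧
    (∀ k : ℕ, a k * 2 ^ k = t k) ∧
    (∀ k : ℕ, 1 ≤ k → g k = t (k - 1) / 2 ^ k + 1) := by
  have key : ∀ k : ℕ, 0 < a k ∧ Even (a k) ∧ a k * 2 ^ k = t k := by
    intro k
    induction k with
    | zero =>
      refine ⟨by omega, by rw [ha0]; exact hev, by rw [ha0, ht0]; ring⟩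
    | succ k ih =>
      obtain ⟨hpos, ⟨m, hm⟩, hat⟩ := ih
      have hm1 : 1 ≤ m := by omega
      have hgk : g (k + 1) = m + 1 := by
        rw [hg (k + 1) (by omega)]
        simp only [Nat.add_sub_cancel]
        omega
      have hak : a (k + 1) = (m + 1) * m := by
        rw [ha (k + 1) (by omega)]
        simp only [Nat.add_sub_cancel]
        rw [hgk, hm]; ring
      refine ⟨by nlinarith, ?_, ?_⟩
      · rw [hak, mul_comm]; exact Int.even_mul_succ_self m
      · rw [ht (k + 1) (by omega)]
        simp only [Nat.add_sub_cancel]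
        rw [hgk, hak, ← hat, hm]; ring
  refine ⟨fun k => ⟨(key k).1, (key k).2.1⟩, fun k => (key k).2.2, ?_⟩
  intro k hk
  obtain ⟨j, rfl⟩ : ∃ j, k = j + 1 := ⟨k - 1, by omega⟩
  obtain ⟨hpos, ⟨m, hm⟩, hat⟩ := key j
  simp only [Nat.add_sub_cancel]
  rw [hg (j + 1) (by omega)]
  simp only [Nat.add_sub_cancel]
  have h2 : t j = m * 2 ^ (j + 1) := by rw [← hat, hm]; ring
  rw [h2, Int.mul_ediv_cancel _ (by positivity)]
  omega
end

section
/- Let n ≥ 3 be an integer and define t_0 = n and t_k = t_{k−1}·(t_{k−1} + 1) for k ≥ 1. Then for every k ≥ 0, n^(2^k) ≤ t_k ≤ (n+1)^(2^k) − 1. In particular the number of server-nodes of DCell(k,n) grows double-exponentially in k. -/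
/-- Let `n ≥ 3` and define `t 0 = n`, `t (k+1) = t k * (t k + 1)`.  Then for
every `k`, `n ^ (2^k) ≤ t k ≤ (n+1) ^ (2^k) - 1`: the number of server-nodes
of DCell(k,n) grows double-exponentially in `k`. -/
theorem dcell_double_exponential (n : ℕ) (hn : 3 ≤ n)
    (t : ℕ → ℕ) (h0 : t 0 = n) (hrec : ∀ k : ℕ, t (k + 1) = t k * (t k + 1)) :
    ∀ k : ℕ, n ^ 2 ^ k ≤ t k ∧ t k ≤ (n + 1) ^ 2 ^ k - 1 := by
  intro k
  induction k with
  | zero => simp [h0]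
  | succ k ih =>
    obtain ⟨hl, hu⟩ := ih
    have hpos : 1 ≤ (n + 1) ^ 2 ^ k := Nat.one_le_pow _ _ (by omega)
    constructor
    · calc n ^ 2 ^ (k + 1) = n ^ 2 ^ k * n ^ 2 ^ k := by
            rw [← pow_add]; ring_nf
        _ ≤ t k * (t k + 1) := Nat.mul_le_mul hl (by omega)
        _ = t (k + 1) := (hrec k).symm
    · have h1 : t k + 1 ≤ (n + 1) ^ 2 ^ k := by omega
      calc t (k + 1) = t k * (t k + 1) := hrec k
        _ ≤ ((n + 1) ^ 2 ^ k - 1) * (n + 1) ^ 2 ^ k := Nat.mul_le_mul hu h1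
        _ = (n + 1) ^ 2 ^ (k + 1) - (n + 1) ^ 2 ^ k := by
            rw [Nat.sub_mul, one_mul, ← pow_add]; ring_nf
        _ ≤ (n + 1) ^ 2 ^ (k + 1) - 1 := by omega
end

section
/- In the server-to-server adjacency graph of DCell(k,n) defined by the level-i connection rules (k ≥ 1, n > 2), every server-node lies on exactly one level-i link for each i ∈ {1, …, k}. Consequently, counting also the single link joining each server-node to the switch of its DCell(0,n), every server-node of DCell(k,n) has degree exactly k + 1, and the total number of links of DCell(k,n) is t_k·(k+2)/2. -/
set_option linter.unusedSectionVars false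


/-- The weight of coordinate `i` in the uid of a DCell label: `1` for `i = 0`
and `t (i-1)` for `i ≥ 1`. -/
def dcellWeight (t : ℕ → ℕ) (i : ℕ) : ℕ := if i = 0 then 1 else t (i - 1)

/-- `uid_{i-1}(x_{i-1}, …, x_0)`: the uid of the part of the label `x` strictly
below coordinate `i`. -/
def dcellUidBelow (t : ℕ → ℕ) (k : ℕ) (i : Fin (k + 1)) (x : Fin (k + 1) → ℕ) : ℕ :=
  ∑ j ∈ Finset.univ.filter (fun j : Fin (k + 1) => j < i), x j * dcellWeight t (j : ℕ)

/-- Valid server-node labels of DCell(k,n): `x 0 < n` and `x i ≤ t (i-1)` for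
`i ≥ 1`. -/
def dcellValid (t : ℕ → ℕ) (n k : ℕ) (x : Fin (k + 1) → ℕ) : Prop :=
  x 0 < n ∧ ∀ i : Fin (k + 1), 0 < (i : ℕ) → x i ≤ t ((i : ℕ) - 1)

/-- Labels `x` and `y` are joined by a level-`i` link: all coordinates above
`i` agree, the copy indices at `i` differ, and (with `x i < y i` w.l.o.g.)
`uid_{i-1}(x) = y i - 1` and `uid_{i-1}(y) = x i`. -/
def dcellLevelLink (t : ℕ → ℕ) (k : ℕ) (i : Fin (k + 1))
    (x y : Fin (k + 1) → ℕ) : Prop :=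
  (∀ j : Fin (k + 1), i < j → x j = y j) ∧ x i ≠ y i ∧
    ((x i < y i ∧ dcellUidBelow t k i x = y i - 1 ∧ dcellUidBelow t k i y = x i) ∨
     (y i < x i ∧ dcellUidBelow t k i y = x i - 1 ∧ dcellUidBelow t k i x = y i))


namespace DCellAux

variable (t : ℕ → ℕ) (n : ℕ)

/-- digit base at position `j` -/
def B (j : ℕ) : ℕ := if j = 0 then n else t (j - 1) + 1

/-- partial uid of a ℕ-indexed digit string -/
def S (x : ℕ → ℕ) (m : ℕ) : ℕ := ∑ j ∈ Finset.range m, x j * dcellWeight t j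

/-- digits of `v` -/
def D (v j : ℕ) : ℕ := v / dcellWeight t j % B t n j

variable {t n}
variable (hn : 3 ≤ n) (h0 : t 0 = n) (hrec : ∀ i : ℕ, t (i + 1) = t i * (t i + 1))
include hn h0 hrec

lemma tpos : ∀ j, 0 < t j := by
  intro j; induction j with
  | zero => omega
  | succ m ih => rw [hrec]; positivity

lemma Bpos : ∀ j, 0 < B t n j := by
  intro j; unfold B; split
  · omega
  · have := tpos hn h0 hrec (j-1); omega

lemma wpos : ∀ j, 0 < dcellWeight t j := by
  intro j; unfold dcellWeight; split
  · omega
  · exact tpos hn h0 hrec (j-1)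

lemma wsucc : ∀ j, dcellWeight t (j+1) = dcellWeight t j * B t n j := by
  intro j
  cases j with
  | zero => simp [dcellWeight, B, h0]
  | succ m => simp [dcellWeight, B, hrec m]

lemma S_lt {x : ℕ → ℕ} {m : ℕ} (hx : ∀ j < m, x j < B t n j) :
    S t x m < dcellWeight t m := by
  induction m with
  | zero => simp [S, dcellWeight]
  | succ m ih =>
    have h1 : S t x m < dcellWeight t m := ih (fun j hj => hx j (by omega))
    have h2 : x m < B t n m := hx m (by omega)
    have e1 : S t x (m+1) = S t x m + x m * dcellWeight t m :=
      Finset.sum_range_succ _ _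
    rw [e1, wsucc hn h0 hrec]
    calc S t x m + x m * dcellWeight t m
        < dcellWeight t m + x m * dcellWeight t m := by omega
      _ = (x m + 1) * dcellWeight t m := by ring
      _ ≤ B t n m * dcellWeight t m :=
          Nat.mul_le_mul_right _ (by omega)
      _ = dcellWeight t m * B t n m := by ring

lemma S_inj {x y : ℕ → ℕ} {m : ℕ} (hx : ∀ j < m, x j < B t n j)
    (hy : ∀ j < m, y j < B t n j) (h : S t x m = S t y m) :
    ∀ j < m, x j = y j := by
  induction m with
  | zero => omega
  | succ m ih =>
    have hx' : ∀ j < m, x j < B t n j := fun j hj => hx j (by omega)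
    have hy' : ∀ j < m, y j < B t n j := fun j hj => hy j (by omega)
    have h1 : S t x m < dcellWeight t m := S_lt hn h0 hrec hx'
    have h2 : S t y m < dcellWeight t m := S_lt hn h0 hrec hy'
    have hw : 0 < dcellWeight t m := wpos hn h0 hrec m
    have e1 : S t x (m+1) = S t x m + x m * dcellWeight t m :=
      Finset.sum_range_succ _ _
    have e2 : S t y (m+1) = S t y m + y m * dcellWeight t m :=
      Finset.sum_range_succ _ _
    rw [e1, e2] at h
    have htop : x m = y m := by
      have := congrArg (· / dcellWeight t m) h
      simpa [Nat.add_mul_div_right _ _ hw, Nat.div_eq_of_lt h1,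
        Nat.div_eq_of_lt h2] using this
    have hS : S t x m = S t y m := by
      rw [htop] at h; omega
    intro j hj
    rcases Nat.lt_succ_iff_lt_or_eq.mp hj with hj | hj
    · exact ih hx' hy' hS j hj
    · rw [hj]; exact htop

lemma mod_eq_S_D (v : ℕ) : ∀ m, v % dcellWeight t m = S t (D t n v) m := by
  intro m
  induction m with
  | zero => simp [S, dcellWeight, Nat.mod_one]
  | succ m ih =>
    have e1 : S t (D t n v) (m+1) = S t (D t n v) m + D t n v m * dcellWeight t m :=
      Finset.sum_range_succ _ _
    rw [wsucc hn h0 hrec, Nat.mod_mul, e1, ← ih]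
    simp [D, Nat.mul_comm]

lemma D_bound (v j : ℕ) : D t n v j < B t n j :=
  Nat.mod_lt _ (Bpos hn h0 hrec j)

lemma S_D {v m : ℕ} (hv : v < dcellWeight t m) : S t (D t n v) m = v := by
  rw [← mod_eq_S_D hn h0 hrec, Nat.mod_eq_of_lt hv]
end DCellAux

namespace DCellAux

/-- extend a Fin-indexed label to ℕ -/
def X (k : ℕ) (x : Fin (k+1) → ℕ) : ℕ → ℕ :=
  fun m => if h : m < k + 1 then x ⟨m, h⟩ else 0

lemma uid_eq (t : ℕ → ℕ) (k : ℕ) (i : Fin (k+1)) (x : Fin (k+1) → ℕ) :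
    dcellUidBelow t k i x = S t (X k x) (i : ℕ) := by
  unfold dcellUidBelow S
  rw [Finset.sum_filter]
  have h1 : ∀ j : Fin (k+1),
      (if j < i then x j * dcellWeight t (j:ℕ) else 0)
      = (fun m => if m < (i:ℕ) then X k x m * dcellWeight t m else 0) (j:ℕ) := by
    intro j
    simp only [X, Fin.lt_def, j.isLt, dif_pos, Fin.eta]
  rw [Finset.sum_congr rfl (fun j _ => h1 j)]
  rw [Fin.sum_univ_eq_sum_range
    (fun m => if m < (i:ℕ) then X k x m * dcellWeight t m else 0) (k+1)]
  rw [Finset.sum_ite, Finset.sum_const_zero, add_zero]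
  congr 1
  ext m
  simp only [Finset.mem_filter, Finset.mem_range]
  constructor
  · rintro ⟨_, h⟩; exact h
  · intro h; exact ⟨lt_of_lt_of_le h (by omega : (i:ℕ) ≤ k+1), h⟩

variable {t : ℕ → ℕ} {n k : ℕ}
variable (hn : 3 ≤ n) (h0 : t 0 = n) (hrec : ∀ i : ℕ, t (i + 1) = t i * (t i + 1))
include hn h0 hrec

lemma valid_bound {x : Fin (k+1) → ℕ} (hx : dcellValid t n k x) :
    ∀ m, m < k + 1 → X k x m < B t n m := by
  intro m hm
  unfold X B
  rcases Nat.eq_zero_or_pos m with h | h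
  · subst h
    simp only [hm, dif_pos, if_pos rfl]
    exact lt_of_lt_of_le (by exact_mod_cast hx.1) (le_refl n)
  · have hm0 : m ≠ 0 := by omega
    simp only [hm, dif_pos, if_neg hm0]
    have h2 : x ⟨m, hm⟩ ≤ t (m - 1) := by simpa using hx.2 ⟨m, hm⟩ (by simpa using h)
    omega

lemma partner_exists_unique {x : Fin (k+1) → ℕ} (hx : dcellValid t n k x)
    (i : Fin (k+1)) (hi : 0 < (i:ℕ)) :
    ∃! y : Fin (k+1) → ℕ, dcellValid t n k y ∧ dcellLevelLink t k i x y := by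
  have hbx : ∀ m < (i:ℕ), X k x m < B t n m :=
    fun m hm => valid_bound hn h0 hrec hx m (by omega)
  have huid_x : dcellUidBelow t k i x = S t (X k x) (i:ℕ) := uid_eq t k i x
  set u := S t (X k x) (i:ℕ) with hu
  have hult : u < dcellWeight t (i:ℕ) := S_lt hn h0 hrec hbx
  have hwi : dcellWeight t (i:ℕ) = t ((i:ℕ)-1) := by
    unfold dcellWeight; rw [if_neg (by omega : ¬ (i:ℕ) = 0)]
  have hale : x i ≤ dcellWeight t (i:ℕ) := by rw [hwi]; exact hx.2 i hi
  -- the new copy index and target uid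
  set b' : ℕ := if x i ≤ u then u + 1 else u with hb'
  set v : ℕ := if x i ≤ u then x i else x i - 1 with hv
  have hvlt : v < dcellWeight t (i:ℕ) := by
    rw [hv]; split <;> omega
  have hble : b' ≤ dcellWeight t (i:ℕ) := by
    rw [hb']; split <;> omega
  set yf : Fin (k+1) → ℕ := fun j =>
    if h : (j:ℕ) < (i:ℕ) then D t n v (j:ℕ) else if j = i then b' else x j with hyf
  have hyf_lt : ∀ j : Fin (k+1), (j:ℕ) < (i:ℕ) → yf j = D t n v (j:ℕ) := by
    intro j hj; simp only [hyf]; rw [dif_pos hj]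
  have hyf_eq : yf i = b' := by
    simp only [hyf]; rw [dif_neg (lt_irrefl _)]; simp
  have hyf_gt : ∀ j : Fin (k+1), (i:ℕ) < (j:ℕ) → yf j = x j := by
    intro j hj; simp only [hyf]
    rw [dif_neg (by omega), if_neg (Fin.ne_of_val_ne (by omega))]
  have hXy : ∀ m, m < (i:ℕ) → X k yf m = D t n v m := by
    intro m hm
    have hmk : m < k + 1 := by omega
    simp only [X, dif_pos hmk]
    have := hyf_lt ⟨m, hmk⟩ (by simpa using hm)
    simpa using this
  have huid_y : dcellUidBelow t k i yf = v := by
    rw [uid_eq]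
    have hS : S t (X k yf) (i:ℕ) = S t (D t n v) (i:ℕ) :=
      Finset.sum_congr rfl (fun m hm => by
        rw [hXy m (Finset.mem_range.mp hm)])
    rw [hS, S_D hn h0 hrec hvlt]
  have hvalid_y : dcellValid t n k yf := by
    constructor
    · have h00 : ((0 : Fin (k+1)) : ℕ) < (i:ℕ) := by simpa using hi
      rw [hyf_lt 0 h00]
      have := D_bound hn h0 hrec (t := t) (n := n) v 0
      simpa [B] using this
    · intro j hj
      rcases lt_trichotomy ((j:ℕ)) ((i:ℕ)) with hc | hc | hc
      · rw [hyf_lt j hc]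
        have := D_bound hn h0 hrec (t := t) (n := n) v (j:ℕ)
        unfold B at this
        rw [if_neg (by omega : ¬ (j:ℕ) = 0)] at this
        omega
      · have hji : j = i := Fin.ext hc
        rw [hji, hyf_eq]
        rw [hwi] at hble
        exact hble
      · rw [hyf_gt j hc]
        exact hx.2 j hj
  have hlink_y : dcellLevelLink t k i x yf := by
    refine ⟨fun j hj => (hyf_gt j hj).symm, ?_, ?_⟩
    · rw [hyf_eq, hb']; split <;> omega
    · rw [hyf_eq, huid_y, huid_x, hb', hv]
      by_cases hc : x i ≤ u
      · left; rw [if_pos hc, if_pos hc]; exact ⟨by omega, by omega, rfl⟩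
      · right; rw [if_neg hc, if_neg hc]; exact ⟨by omega, rfl, by omega⟩
  refine ⟨yf, ⟨hvalid_y, hlink_y⟩, ?_⟩
  rintro z ⟨hz, habove, hne, hdisj⟩
  have huid_z : dcellUidBelow t k i z = S t (X k z) (i:ℕ) := uid_eq t k i z
  have hbz : ∀ m < (i:ℕ), X k z m < B t n m :=
    fun m hm => valid_bound hn h0 hrec hz m (by omega)
  have key : z i = b' ∧ S t (X k z) (i:ℕ) = v := by
    rcases hdisj with ⟨hlt, h1, h2⟩ | ⟨hlt, h1, h2⟩
    · -- x i < z i, uid x = z i - 1, uid z = x i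
      rw [huid_x] at h1
      rw [huid_z] at h2
      have hcase : x i ≤ u := by omega
      constructor
      · rw [hb', if_pos hcase]; omega
      · rw [hv, if_pos hcase]; exact h2
    · -- z i < x i, uid z = x i - 1, uid x = z i
      rw [huid_x] at h2
      rw [huid_z] at h1
      have hcase : ¬ x i ≤ u := by omega
      constructor
      · rw [hb', if_neg hcase]; omega
      · rw [hv, if_neg hcase]; exact h1
  have hdig : ∀ m, m < (i:ℕ) → X k z m = D t n v m := by
    have hSz : S t (X k z) (i:ℕ) = S t (D t n v) (i:ℕ) := by
      rw [key.2, S_D hn h0 hrec hvlt]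
    exact S_inj hn h0 hrec hbz (fun m _ => D_bound hn h0 hrec v m) hSz
  funext j
  rcases lt_trichotomy ((j:ℕ)) ((i:ℕ)) with hc | hc | hc
  · rw [hyf_lt j hc]
    have := hdig (j:ℕ) hc
    simpa [X, j.isLt, Fin.eta] using this
  · have hji : j = i := Fin.ext hc
    rw [hji, hyf_eq, key.1]
  · rw [hyf_gt j hc, ← habove j (by exact hc)]

lemma valid_ncard : {x : Fin (k+1) → ℕ | dcellValid t n k x}.ncard = t k := by
  have hwk : dcellWeight t (k+1) = t k := by simp [dcellWeight]
  have himg : {x : Fin (k+1) → ℕ | dcellValid t n k x}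
      = (fun v => fun j : Fin (k+1) => D t n v (j:ℕ)) '' Set.Iio (t k) := by
    ext x
    constructor
    · intro hx
      have hb := valid_bound hn h0 hrec hx
      have hvlt : S t (X k x) (k+1) < t k := by
        rw [← hwk]; exact S_lt hn h0 hrec (fun j hj => hb j hj)
      refine ⟨S t (X k x) (k+1), hvlt, ?_⟩
      have hSD : S t (D t n (S t (X k x) (k+1))) (k+1) = S t (X k x) (k+1) :=
        S_D hn h0 hrec (by rw [hwk]; exact hvlt)
      have hd := S_inj hn h0 hrec (fun m _ => D_bound hn h0 hrec _ m)
        (fun m hm => hb m hm) hSD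
      funext j
      have h1 := hd (j:ℕ) j.isLt
      have h2 : X k x (j:ℕ) = x j := by simp [X, j.isLt]
      show D t n (S t (X k x) (k+1)) (j:ℕ) = x j
      rw [h1, h2]
    · rintro ⟨v, hv, rfl⟩
      constructor
      · have := D_bound hn h0 hrec (t := t) (n := n) v 0
        simpa [B] using this
      · intro j hj
        have := D_bound hn h0 hrec (t := t) (n := n) v (j:ℕ)
        unfold B at this
        rw [if_neg (by omega : ¬ (j:ℕ) = 0)] at this
        simp only []
        omega
  rw [himg]
  have hinj : Set.InjOn (fun v => fun j : Fin (k+1) => D t n v (j:ℕ)) (Set.Iio (t k)) := by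
    intro v hv v' hv' heq
    have hd : ∀ m, m < k+1 → D t n v m = D t n v' m := by
      intro m hm
      have := congrFun heq ⟨m, hm⟩
      simpa using this
    have hS : S t (D t n v) (k+1) = S t (D t n v') (k+1) :=
      Finset.sum_congr rfl (fun m hm => by rw [hd m (Finset.mem_range.mp hm)])
    rw [S_D hn h0 hrec (by rw [hwk]; exact hv), S_D hn h0 hrec (by rw [hwk]; exact hv')] at hS
    exact hS
  rw [Set.ncard_image_of_injOn hinj, ← Finset.coe_range, Set.ncard_coe_finset,
    Finset.card_range]

omit hn h0 hrec in
lemma partner_ne {i i' : Fin (k+1)} (hii : i < i') {x y y' : Fin (k+1) → ℕ}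
    (h : dcellLevelLink t k i x y) (h' : dcellLevelLink t k i' x y') : y ≠ y' := by
  intro heq
  have h1 : x i' = y i' := h.1 i' hii
  have h2 : x i' ≠ y' i' := h'.2.1
  rw [heq] at h1
  exact h2 h1

omit hn h0 hrec in
lemma I_ncard : {i : Fin (k+1) | 0 < (i:ℕ)}.ncard = k := by
  have h1 : {i : Fin (k+1) | 0 < (i:ℕ)}
      = ↑(Finset.univ.filter (fun i : Fin (k+1) => 0 < (i:ℕ))) := by
    ext i; simp
  rw [h1, Set.ncard_coe_finset]
  have h2 : Finset.univ.filter (fun i : Fin (k+1) => 0 < (i:ℕ))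
      = Finset.univ.erase 0 := by
    ext i
    simp only [Finset.mem_filter, Finset.mem_erase, Finset.mem_univ, and_true, true_and, ne_eq,
      Fin.ext_iff, Fin.val_zero]
    omega
  rw [h2, Finset.card_erase_of_mem (Finset.mem_univ _), Finset.card_univ]
  simp

omit hn h0 hrec in
lemma ncard_prod {α β : Type*} (s : Set α) (u : Set β) :
    (s ×ˢ u).ncard = s.ncard * u.ncard := by
  rw [← Nat.card_coe_set_eq, ← Nat.card_coe_set_eq, ← Nat.card_coe_set_eq,
    ← Nat.card_prod]
  exact Nat.card_congr (Equiv.Set.prod s u)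

end DCellAux


/-- In the server-to-server adjacency graph of DCell(k,n) (`k ≥ 1`, `n > 2`):
every server-node lies on exactly one level-`i` link for each `1 ≤ i ≤ k`;
hence, counting also the single link to the switch of its DCell(0,n), every
server-node has degree exactly `k + 1`, and twice the total number of links of
DCell(k,n) (the ordered server-to-server adjacencies plus twice the `t k`
switch links) is `t k * (k + 2)`, i.e. there are `t k * (k+2) / 2` links. -/
theorem dcell_degree_and_link_count (n k : ℕ) (hn : 3 ≤ n) (hk : 1 ≤ k)
    (t : ℕ → ℕ) (h0 : t 0 = n) (hrec : ∀ i : ℕ, t (i + 1) = t i * (t i + 1)) :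
    (∀ x : Fin (k + 1) → ℕ, dcellValid t n k x → ∀ i : Fin (k + 1), 0 < (i : ℕ) →
      ∃! y : Fin (k + 1) → ℕ, dcellValid t n k y ∧ dcellLevelLink t k i x y) ∧
    (∀ x : Fin (k + 1) → ℕ, dcellValid t n k x →
      {y : Fin (k + 1) → ℕ | dcellValid t n k y ∧
        ∃ i : Fin (k + 1), 0 < (i : ℕ) ∧ dcellLevelLink t k i x y}.ncard + 1
        = k + 1) ∧
    {p : (Fin (k + 1) → ℕ) × (Fin (k + 1) → ℕ) |
        dcellValid t n k p.1 ∧ dcellValid t n k p.2 ∧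
        ∃ i : Fin (k + 1), 0 < (i : ℕ) ∧ dcellLevelLink t k i p.1 p.2}.ncard
      + 2 * t k = t k * (k + 2) := by
  have part1 : ∀ x : Fin (k + 1) → ℕ, dcellValid t n k x → ∀ i : Fin (k + 1),
      0 < (i : ℕ) →
      ∃! y : Fin (k + 1) → ℕ, dcellValid t n k y ∧ dcellLevelLink t k i x y :=
    fun x hx i hi => DCellAux.partner_exists_unique hn h0 hrec hx i hi
  classical
  set P : (Fin (k+1) → ℕ) → Fin (k+1) → (Fin (k+1) → ℕ) := fun x i =>
    if h : dcellValid t n k x ∧ 0 < (i:ℕ) then (part1 x h.1 i h.2).choose else x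
    with hP
  have hPspec : ∀ x, ∀ hx : dcellValid t n k x, ∀ i : Fin (k+1), ∀ hi : 0 < (i:ℕ),
      (dcellValid t n k (P x i) ∧ dcellLevelLink t k i x (P x i)) ∧
      ∀ z, dcellValid t n k z ∧ dcellLevelLink t k i x z → z = P x i := by
    intro x hx i hi
    have h : dcellValid t n k x ∧ 0 < (i:ℕ) := ⟨hx, hi⟩
    simp only [hP, dif_pos h]
    exact ⟨(part1 x h.1 i h.2).choose_spec.1, (part1 x h.1 i h.2).choose_spec.2⟩
  have hnb : ∀ x, dcellValid t n k x →
      {y : Fin (k + 1) → ℕ | dcellValid t n k y ∧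
        ∃ i : Fin (k + 1), 0 < (i : ℕ) ∧ dcellLevelLink t k i x y}
      = P x '' {i : Fin (k+1) | 0 < (i:ℕ)} := by
    intro x hx
    ext y
    constructor
    · rintro ⟨hy, i, hi, hl⟩
      exact ⟨i, hi, ((hPspec x hx i hi).2 y ⟨hy, hl⟩).symm⟩
    · rintro ⟨i, hi, rfl⟩
      obtain ⟨⟨hv, hl⟩, -⟩ := hPspec x hx i hi
      exact ⟨hv, i, hi, hl⟩
  have hPinj : ∀ x, dcellValid t n k x →
      Set.InjOn (P x) {i : Fin (k+1) | 0 < (i:ℕ)} := by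
    intro x hx i hi i' hi' heq
    by_contra hne
    rcases lt_or_gt_of_ne hne with hlt | hlt
    · exact DCellAux.partner_ne hlt (hPspec x hx i hi).1.2 (hPspec x hx i' hi').1.2 heq
    · exact DCellAux.partner_ne hlt (hPspec x hx i' hi').1.2 (hPspec x hx i hi).1.2
        heq.symm
  have part2 : ∀ x : Fin (k + 1) → ℕ, dcellValid t n k x →
      {y : Fin (k + 1) → ℕ | dcellValid t n k y ∧
        ∃ i : Fin (k + 1), 0 < (i : ℕ) ∧ dcellLevelLink t k i x y}.ncard + 1
        = k + 1 := by
    intro x hx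
    rw [hnb x hx, Set.ncard_image_of_injOn (hPinj x hx), DCellAux.I_ncard]
  refine ⟨part1, part2, ?_⟩
  have hpair : {p : (Fin (k + 1) → ℕ) × (Fin (k + 1) → ℕ) |
        dcellValid t n k p.1 ∧ dcellValid t n k p.2 ∧
        ∃ i : Fin (k + 1), 0 < (i : ℕ) ∧ dcellLevelLink t k i p.1 p.2}
      = (fun q : (Fin (k + 1) → ℕ) × Fin (k + 1) => (q.1, P q.1 q.2)) ''
        ({x : Fin (k+1) → ℕ | dcellValid t n k x} ×ˢ {i : Fin (k+1) | 0 < (i:ℕ)}) := by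
    ext p
    constructor
    · rintro ⟨h1, h2, i, hi, hl⟩
      refine ⟨(p.1, i), ⟨h1, hi⟩, ?_⟩
      have h3 := (hPspec p.1 h1 i hi).2 p.2 ⟨h2, hl⟩
      show (p.1, P p.1 i) = p
      rw [← h3]
    · rintro ⟨⟨x, i⟩, ⟨hx, hi⟩, rfl⟩
      obtain ⟨⟨hv, hl⟩, -⟩ := hPspec x hx i hi
      exact ⟨hx, hv, i, hi, hl⟩
  have hFinj : Set.InjOn (fun q : (Fin (k + 1) → ℕ) × Fin (k + 1) => (q.1, P q.1 q.2))
      ({x : Fin (k+1) → ℕ | dcellValid t n k x} ×ˢ {i : Fin (k+1) | 0 < (i:ℕ)}) := by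
    rintro ⟨x, i⟩ ⟨hx, hi⟩ ⟨x', i'⟩ ⟨hx', hi'⟩ heq
    have h1 : x = x' := congrArg Prod.fst heq
    subst h1
    have h2 : P x i = P x i' := congrArg Prod.snd heq
    have h3 := hPinj x hx hi hi' h2
    subst h3
    rfl
  rw [hpair, Set.ncard_image_of_injOn hFinj, DCellAux.ncard_prod,
    DCellAux.valid_ncard hn h0 hrec, DCellAux.I_ncard]
  ring
end
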